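/- Let Z be a real m×q matrix, let Q_R be a real orthogonal m×m matrix, let D½ be a real diagonal m×m matrix with nonnegative diagonal entries, and set R = Q_R (D½)² Q_Rᵀ. Form the pre-array A = [ Z , Q_R·D½ ] (horizontal concatenation) and suppose A = W S Vᵀ where W is an orthogonal m×m matrix, S is a diagonal m×m matrix with all diagonal entries nonzero, and V is a (q+m)×m matrix with orthonormal columns (VᵀV = I_m). Then the innovation covariance R_e = Z Zᵀ + R is invertible and, for every real n×m matrix P_xz, the cubature gain satisfies P_xz R_e⁻¹ = P_xz W S⁻² Wᵀ. -/

import Mathlib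

open Matrix

/-- If the measurement-update pre-array `A = [Z, Q_R D½]` has SVD
`A = W S Vᵀ` with `S` diagonal and nonsingular, then `R_e = Z Zᵀ + R` is
invertible and the cubature gain satisfies `P_xz R_e⁻¹ = P_xz W S⁻² Wᵀ`. -/
theorem svd_gain_equiv_conventional (m q n : ℕ)
    (Z : Matrix (Fin m) (Fin q) ℝ)
    (QR Dhalf : Matrix (Fin m) (Fin m) ℝ)
    (hQR : QRᵀ * QR = 1) (hDhalf : Dhalf.IsDiag) (hDpos : ∀ i, 0 ≤ Dhalf i i)
    (R : Matrix (Fin m) (Fin m) ℝ) (hR : R = QR * (Dhalf * Dhalf) * QRᵀ)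
    (A : Matrix (Fin m) (Fin q ⊕ Fin m) ℝ)
    (hA : A = fromCols Z (QR * Dhalf))
    (W S : Matrix (Fin m) (Fin m) ℝ)
    (hW : Wᵀ * W = 1) (hS : S.IsDiag) (hSnz : ∀ i, S i i ≠ 0)
    (V : Matrix (Fin q ⊕ Fin m) (Fin m) ℝ) (hV : Vᵀ * V = 1)
    (hSVD : A = W * S * Vᵀ) :
    IsUnit (Z * Zᵀ + R) ∧
      ∀ Pxz : Matrix (Fin n) (Fin m) ℝ,
        Pxz * (Z * Zᵀ + R)⁻¹ = Pxz * W * (S * S)⁻¹ * Wᵀ := by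
  have hDsym : Dhalfᵀ = Dhalf := hDhalf.isSymm
  have hSsym : Sᵀ = S := hS.isSymm
  -- key identity: Z Zᵀ + R = A Aᵀ = W (S S) Wᵀ
  have hAA : Z * Zᵀ + R = W * (S * S) * Wᵀ := by
    have h1 : A * Aᵀ = Z * Zᵀ + R := by
      rw [hA, transpose_fromCols, fromCols_mul_fromRows, hR]
      congr 1
      rw [transpose_mul, hDsym]
      simp [Matrix.mul_assoc]
    have h2 : A * Aᵀ = W * (S * S) * Wᵀ := by
      rw [hSVD]
      simp only [transpose_mul, transpose_transpose, hSsym]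
      calc W * S * Vᵀ * (V * (S * Wᵀ))
          = W * S * (Vᵀ * V) * (S * Wᵀ) := by simp [Matrix.mul_assoc]
        _ = W * (S * S) * Wᵀ := by rw [hV]; simp [Matrix.mul_assoc]
    rw [← h1, h2]
  -- W and S are units
  have hWunit : IsUnit W := by
    have : IsUnit W.det := by
      have := congrArg Matrix.det hW
      rw [Matrix.det_mul, Matrix.det_transpose, Matrix.det_one] at this
      exact IsUnit.of_mul_eq_one _ this
    exact (Matrix.isUnit_iff_isUnit_det W).mpr this
  have hWWt : W * Wᵀ = 1 := mul_eq_one_comm.mp hW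
  have hWinv : W⁻¹ = Wᵀ := Matrix.inv_eq_left_inv hW
  have hWtinv : Wᵀ⁻¹ = W := Matrix.inv_eq_left_inv hWWt
  have hSdet : IsUnit S.det := by
    rw [← hS.diagonal_diag, Matrix.det_diagonal]
    exact isUnit_iff_ne_zero.mpr (Finset.prod_ne_zero_iff.mpr fun i _ => hSnz i)
  have hSunit : IsUnit S := (Matrix.isUnit_iff_isUnit_det S).mpr hSdet
  have hSSunit : IsUnit (S * S) := hSunit.mul hSunit
  have hWtunit : IsUnit Wᵀ := (Matrix.isUnit_iff_isUnit_det _).mpr (by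
    rw [Matrix.det_transpose]; exact (Matrix.isUnit_iff_isUnit_det W).mp hWunit)
  refine ⟨by rw [hAA]; exact (hWunit.mul hSSunit).mul hWtunit, fun Pxz => ?_⟩
  have hinv : (Z * Zᵀ + R)⁻¹ = W * (S * S)⁻¹ * Wᵀ := by
    rw [hAA, Matrix.mul_inv_rev, Matrix.mul_inv_rev, hWinv, hWtinv, mul_assoc]
  rw [hinv]; simp [Matrix.mul_assoc]
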